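/- For every j ∈ {1,…,n} and every pair 1 ≤ k < l ≤ n, the element E_{kl} · z_j^- of U lies in the left ideal J := U·span{E_{ab} : 1 ≤ a < b ≤ n}. Consequently, in any U-module, z_j^- maps the subspace of vectors annihilated by all E_{ab} with a < b into itself. -/

import Mathlib

open scoped BigOperators

noncomputable section

namespace OspBasis

/-- Commutator. -/
def br {U : Type*} [Ring U] (x y : U) : U := x * y - y * x

/-- Anticommutator. -/
def abr {U : Type*} [Ring U] (x y : U) : U := x * y + y * x

/-- The sign of a generator label: `true` = `+` ↦ 1, `false` = `−` ↦ −1. -/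
def sg : Bool → ℂ := fun b => if b then 1 else -1

/-- Generators `B_j^±` of (the universal enveloping algebra of) `osp(1|2n)` together with
the Ganchev–Palev relations. -/
structure OspData (n : ℕ) (U : Type*) [Ring U] [Algebra ℂ U] where
  B : Bool → Fin n → U
  rel : ∀ (i j l : Fin n) (ξ η ε : Bool),
    br (abr (B ξ i) (B η j)) (B ε l) =
      (sg ε - sg η) • (if j = l then B ξ i else 0) +
      (sg ε - sg ξ) • (if i = l then B η j else 0)

variable {n : ℕ} {U : Type*} [Ring U] [Algebra ℂ U]

/-- `E_{ij} := (1/2){B_i^+, B_j^-}`. -/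
def Eop (d : OspData n U) (i j : Fin n) : U :=
  (2 : ℂ)⁻¹ • abr (d.B true i) (d.B false j)

/-- `h_i := E_{ii} − i + 1` (in 1-indexed notation); with 0-indexing, `h_i = E_{ii} − i`. -/
def hOp (d : OspData n U) (i : Fin n) : U :=
  Eop d i i - (((i : ℕ) : ℂ)) • (1 : U)

/- ### Combinatorics of partitions and tableaux -/

/-- The number of columns of (the Young diagram of) `lam`. -/
def width (lam : Fin n → ℕ) : ℕ := Finset.univ.sup lam

/-- The length of the `l`-th column (0-indexed) of the diagram of `lam`. -/
def colLen (lam : Fin n → ℕ) (l : ℕ) : ℕ :=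
  (Finset.univ.filter (fun k : Fin n => l < lam k)).card

/-- `ℓ(λ)`, the number of nonzero parts. -/
def plen (lam : Fin n → ℕ) : ℕ :=
  (Finset.univ.filter (fun k : Fin n => 0 < lam k)).card

/-- A filling `A : ℕ → ℕ → Fin n` (row, column) is semistandard for the shape `lam`:
rows weakly increase, columns strictly increase (only cells of the diagram matter). -/
def IsSSYT (lam : Fin n → ℕ) (A : ℕ → ℕ → Fin n) : Prop :=
  (∀ (k : Fin n) (l1 l2 : ℕ), l1 ≤ l2 → l2 < lam k → A (k : ℕ) l1 ≤ A (k : ℕ) l2) ∧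
  (∀ (k1 k2 : Fin n) (l : ℕ), k1 < k2 → l < lam k2 → A (k1 : ℕ) l < A (k2 : ℕ) l)

/-- A filling is normalized if it takes the default value `0` outside the diagram of `lam`;
this makes the representation of a tableau by a total function unique. -/
def IsNormalized (hn : 0 < n) (lam : Fin n → ℕ) (A : ℕ → ℕ → Fin n) : Prop :=
  ∀ k l : ℕ, (∀ hk : k < n, lam ⟨k, hk⟩ ≤ l) → A k l = ⟨0, hn⟩

/-- The exponent matrix `γ_A`: `(γ_A)_{ij}` = number of entries equal to `i` in row `j`. -/
def expMat (lam : Fin n → ℕ) (A : ℕ → ℕ → Fin n) : Matrix (Fin n) (Fin n) ℕ :=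
  Matrix.of fun i j => ((Finset.range (lam j)).filter (fun l => A (j : ℕ) l = i)).card

/-- The `j`-th row of `D(γ)` as a list: `γ_{ij}` copies of `i`, in increasing order of `i`. -/
def rowList (γ : Matrix (Fin n) (Fin n) ℕ) (j : Fin n) : List (Fin n) :=
  (List.finRange n).flatMap (fun i => List.replicate (γ i j) i)

/-- The row-weakly-increasing filling `D(γ)` having `γ_{ij}` entries equal to `i` in row `j`. -/
def Dfill (hn : 0 < n) (γ : Matrix (Fin n) (Fin n) ℕ) : ℕ → ℕ → Fin n :=
  fun k l => if hk : k < n then (rowList γ ⟨k, hk⟩).getD l ⟨0, hn⟩ else ⟨0, hn⟩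

/-- The Young subgroup `S_{λ'}` acting on columns. -/
abbrev ColPerm (lam : Fin n → ℕ) :=
  ∀ l : Fin (width lam), Equiv.Perm (Fin (colLen lam (l : ℕ)))

/-- The Young subgroup `S_λ` acting on rows. -/
abbrev RowPerm (lam : Fin n → ℕ) :=
  ∀ k : Fin n, Equiv.Perm (Fin (lam k))

/-- The column-permuted filling `A_σ(k,l) = A(σ_l(k), l)`. -/
def colPermute (lam : Fin n → ℕ) (A : ℕ → ℕ → Fin n) (σ : ColPerm lam) : ℕ → ℕ → Fin n :=
  fun k l =>
    if hl : l < width lam then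
      if hk : k < colLen lam l then A ((σ ⟨l, hl⟩) ⟨k, hk⟩ : ℕ) l else A k l
    else A k l

/-- The row-permuted filling `A^τ(k,l) = A(k, τ_k(l))`. -/
def rowPermute (lam : Fin n → ℕ) (A : ℕ → ℕ → Fin n) (τ : RowPerm lam) : ℕ → ℕ → Fin n :=
  fun k l =>
    if hk : k < n then
      if hl : l < lam ⟨k, hk⟩ then A k ((τ ⟨k, hk⟩) ⟨l, hl⟩ : ℕ) else A k l
    else A k l

/-- `sgn(σ) = sgn(σ_1)⋯sgn(σ_{ℓ(λ')})`. -/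
def sgnC (lam : Fin n → ℕ) (σ : ColPerm lam) : ℂ :=
  ∏ l : Fin (width lam), ((Equiv.Perm.sign (σ l) : ℤ) : ℂ)

/-- `B_A^+`, the column-by-column (left to right), top-to-bottom ordered product of the
creation operators prescribed by the filling `A`. -/
def BAop (d : OspData n U) (lam : Fin n → ℕ) (A : ℕ → ℕ → Fin n) : U :=
  ((List.range (width lam)).map (fun l =>
    ((List.range (colLen lam l)).map (fun k => d.B true (A k l))).prod)).prod

/-- The monomial `E^γ = ∏→_{k=2..n} (E_{k1}^{γ_{k1}} ⋯ E_{k,k−1}^{γ_{k,k−1}})`. -/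
def Epow (d : OspData n U) (γ : Matrix (Fin n) (Fin n) ℕ) : U :=
  ((List.finRange n).map (fun (k : Fin n) =>
    ((List.finRange n).map (fun (j : Fin n) =>
      if (j : ℕ) < (k : ℕ) then (Eop d k j) ^ (γ k j) else 1)).prod)).prod

variable {M : Type*} [AddCommGroup M] [Module ℂ M] [Module U M]

/-- `ω_A := Σ_{σ ∈ S_{λ'}} sgn(σ) B^+_{A_σ} v₀`. -/
def omegaA (d : OspData n U) (lam : Fin n → ℕ) (v0 : M) (A : ℕ → ℕ → Fin n) : M :=
  ∑ σ : ColPerm lam, sgnC lam σ • ((BAop d lam (colPermute lam A σ)) • v0)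

/-- `Ω_A := Σ_{τ ∈ S_λ} ω_{A^τ}`. -/
def OmegaA (d : OspData n U) (lam : Fin n → ℕ) (v0 : M) (A : ℕ → ℕ → Fin n) : M :=
  ∑ τ : RowPerm lam, omegaA d lam v0 (rowPermute lam A τ)

/-- `Ω_λ := Ω_{D(γ_λ)}` where `γ_λ = diag(λ_1,…,λ_n)`. -/
def OmegaLam (d : OspData n U) (hn : 0 < n) (lam : Fin n → ℕ) (v0 : M) : M :=
  OmegaA d lam v0 (Dfill hn (Matrix.diagonal lam))

/- ### Mickelsson–Zhelobenko raising and lowering operators -/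

/-- Ordered product over a finite set of (pairwise commuting) algebra elements. -/
def oprod (S : Finset (Fin n)) (f : Fin n → U) : U :=
  ((S.sort (· ≤ ·)).map f).prod

/-- `E^{e_I} = E_{i_2 i_1} E_{i_3 i_2} ⋯ E_{i_s i_{s−1}}` for `I = (i_1, …, i_s)`. -/
def chainE (d : OspData n U) : List (Fin n) → U
  | a :: b :: rest => Eop d b a * chainE d (b :: rest)
  | _ => 1

/-- `∏_{u} γ_{i_{u+1} i_u}` over consecutive pairs of a list. -/
def chainProd (γ : Matrix (Fin n) (Fin n) ℕ) : List (Fin n) → ℕ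
  | a :: b :: rest => γ b a * chainProd γ (b :: rest)
  | _ => 1

/-- `e_I = Σ_u e_{i_{u+1} i_u}` over consecutive pairs of a list. -/
def eJmat : List (Fin n) → Matrix (Fin n) (Fin n) ℕ
  | a :: b :: rest => Matrix.single b a 1 + eJmat (b :: rest)
  | _ => 0

/-- The increasing sequence `I ∈ 𝓘_{ij}(s)` determined by its set `{i} ∪ {j} ∪ T` of members. -/
def sortIns (i j : Fin n) (T : Finset (Fin n)) : List (Fin n) :=
  Finset.sort (insert i (insert j T)) (· ≤ ·)

/-- The normalized raising operator `z_j^+`. -/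
def zplus (d : OspData n U) (j : Fin n) : U :=
  ∑ i ∈ Finset.Iic j, ∑ T ∈ (Finset.Ioo i j).powerset,
    ((-1 : ℂ) ^ (T.card + (if i = j then 0 else 1))) •
      (chainE d (sortIns i j T) * d.B true i *
        oprod ((Finset.Ioo i j) \ T) (fun l => hOp d l - hOp d j - 1) *
        oprod (Finset.Iio i) (fun l => hOp d l - hOp d j))

/-- The normalized lowering operator `z_j^-`. -/
def zminus (d : OspData n U) (j : Fin n) : U :=
  ∑ i ∈ Finset.Ici j, ∑ T ∈ (Finset.Ioo j i).powerset,
    chainE d (sortIns j i T) * d.B false i *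
      oprod ((Finset.Ioi j) \ (insert i T)) (fun l => hOp d j - hOp d l)

/-- The `gl`-lowering operator `y_{mj}` (for `j < m`). -/
def yop (d : OspData n U) (m j : Fin n) : U :=
  Eop d m j * oprod (Finset.Ioo j m) (fun l => hOp d j - hOp d l)
  + ∑ i ∈ Finset.Ioo j m, ∑ T ∈ (Finset.Ioo j i).powerset,
      chainE d (sortIns j i T) * Eop d m i *
        oprod ((Finset.Ioo j m) \ (insert j (insert i T))) (fun l => hOp d j - hOp d l)

/-- `∏→_{k=2..n} (y_{k1}^{γ_{k1}} ⋯ y_{k,k−1}^{γ_{k,k−1}})`. -/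
def Ypow (d : OspData n U) (γ : Matrix (Fin n) (Fin n) ℕ) : U :=
  ((List.finRange n).map (fun (k : Fin n) =>
    ((List.finRange n).map (fun (j : Fin n) =>
      if (j : ℕ) < (k : ℕ) then (yop d k j) ^ (γ k j) else 1)).prod)).prod

/-- `(z_n^+)^{λ_n} ⋯ (z_1^+)^{λ_1}`. -/
def Zword (d : OspData n U) (lam : Fin n → ℕ) : U :=
  ((List.finRange n).reverse.map (fun j => (zplus d j) ^ (lam j))).prod

/- ### The coefficients `d_i^±(λ)` -/

/-- Extension of `λ` by zero; `lamext lam a = λ_{a+1}` in 1-indexed notation, `λ_{n+1} = 0`. -/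
def lamext (lam : Fin n → ℕ) (a : ℕ) : ℕ := if h : a < n then lam ⟨a, h⟩ else 0

/-- `[m]_2`: 0 if `m` is even, 1 if `m` is odd. -/
def parZ (m : ℤ) : ℕ := m.natAbs % 2

/-- The coefficient `d_i^+(λ)`. -/
def dplus (lam : Fin n → ℕ) (i : Fin n) : ℂ :=
  ((-1 : ℂ)) ^ (∑ a ∈ Finset.Ico (i : ℕ) n,
      (a + 2) * ((lamext lam a - lamext lam (a + 1)) + (if a = (i : ℕ) then 1 else 0)))
    / (((lam i : ℂ) + 1) * (((i : ℕ) : ℂ) + 1))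
    * ∏ l ∈ Finset.Iio i,
        (((lam i : ℂ) - (lam l : ℂ) - ((i : ℕ) : ℂ) + ((l : ℕ) : ℂ) + 1) /
         ((lam i : ℂ) - (lam l : ℂ) - ((i : ℕ) : ℂ) + ((l : ℕ) : ℂ) +
           (parZ ((lam i : ℤ) - (lam l : ℤ)) : ℂ)))

/-- The coefficient `d_i^-(λ)`. -/
def dminus (p : ℕ) (lam : Fin n → ℕ) (i : Fin n) : ℂ :=
  ((-1 : ℂ)) ^ (∑ a ∈ Finset.Ico (i : ℕ) n, (a + 2) * (lamext lam a - lamext lam (a + 1)))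
    * ((lam i : ℂ) + 1) * (((i : ℕ) : ℂ) + 1)
    * ((lam i : ℂ) + (n : ℂ) - (((i : ℕ) : ℂ) + 1) + (parZ (lam i : ℤ) : ℂ) * ((p : ℂ) - (n : ℂ)))
    * ∏ l ∈ Finset.Ioi i,
        (((lam i : ℂ) - (lam l : ℂ) - ((i : ℕ) : ℂ) + ((l : ℕ) : ℂ) - 1) /
         ((lam i : ℂ) - (lam l : ℂ) - ((i : ℕ) : ℂ) + ((l : ℕ) : ℂ) -
           (parZ ((lam i : ℤ) - (lam l : ℤ)) : ℂ)))

/-- The index set of semistandard Young tableaux with at most `p` rows (shape bundled),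
in normalized total-function representation. -/
def SSYTp (hn : 0 < n) (p : ℕ) :=
  {x : (Fin n → ℕ) × (ℕ → ℕ → Fin n) //
    Antitone x.1 ∧ plen x.1 ≤ p ∧ IsSSYT x.1 x.2 ∧ IsNormalized hn x.1 x.2}

end OspBasis

open OspBasis

section Aux
set_option linter.unusedSectionVars false
open OspBasis Finset

variable {n : ℕ} {U : Type*} [Ring U] [Algebra ℂ U]

lemma br_smul_left (c : ℂ) (x y : U) : br (c • x) y = c • br x y := by
  simp [br, smul_sub, smul_mul_assoc, mul_smul_comm]

lemma br_smul_right (c : ℂ) (x y : U) : br x (c • y) = c • br x y := by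
  simp [br, smul_sub, smul_mul_assoc, mul_smul_comm]

lemma br_abr (x y z : U) : br x (abr y z) = abr (br x y) z + abr y (br x z) := by
  simp only [br, abr]; noncomm_ring

lemma br_sub_right (x y z : U) : br x (y - z) = br x y - br x z := by
  simp only [br]; noncomm_ring

lemma mul_eq_of_br (x y z : U) (h : br x y = z) : x * y = y * x + z := by
  rw [← h]; simp [br]

lemma commute_of_br (x y : U) (h : br x y = 0) : Commute x y := by
  have := mul_eq_of_br x y 0 h
  show x * y = y * x
  rw [this, add_zero]

lemma br_neg_swap (x y : U) : br x y = - br y x := by simp [br]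

variable (d : OspData n U)

lemma br_Eop_Bm (a b l : Fin n) :
    br (Eop d a b) (d.B false l) = -(if a = l then d.B false b else 0) := by
  rw [Eop, br_smul_left, d.rel]
  simp only [sg]
  norm_num
  rw [smul_smul]
  norm_num
  split_ifs <;> simp

lemma br_Eop_Bp (a b l : Fin n) :
    br (Eop d a b) (d.B true l) = (if b = l then d.B true a else 0) := by
  rw [Eop, br_smul_left, d.rel]
  simp only [sg]
  norm_num
  rw [smul_smul]
  norm_num

lemma abr_ite_left (p : Prop) [Decidable p] (x y : U) :
    abr (if p then x else 0) y = if p then abr x y else 0 := by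
  split_ifs <;> simp [abr]

lemma abr_neg_left (x y : U) : abr (-x) y = -abr x y := by simp only [abr, neg_mul, mul_neg]; abel

lemma abr_neg_right (x y : U) : abr x (-y) = -abr x y := by simp only [abr, neg_mul, mul_neg]; abel

lemma abr_ite_right (p : Prop) [Decidable p] (x y : U) :
    abr x (if p then y else 0) = if p then abr x y else 0 := by
  split_ifs <;> simp [abr]

lemma br_Eop_Eop (a b c e : Fin n) :
    br (Eop d a b) (Eop d c e) =
      (if b = c then Eop d a e else 0) - (if a = e then Eop d c b else 0) := by
  rw [show Eop d c e = (2:ℂ)⁻¹ • abr (d.B true c) (d.B false e) from rfl,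
    br_smul_right, br_abr, br_Eop_Bp, br_Eop_Bm, abr_ite_left,
    abr_neg_right, abr_ite_right]
  rw [show abr (d.B true a) (d.B false e) = (2:ℂ) • Eop d a e by
    rw [Eop, smul_smul]; norm_num,
    show abr (d.B true c) (d.B false b) = (2:ℂ) • Eop d c b by
    rw [Eop, smul_smul]; norm_num]
  split_ifs <;> simp [smul_sub, smul_smul, sub_eq_add_neg] <;> norm_num

lemma br_hOp (x : Fin n) (y : U) : br (hOp d x) y = br (Eop d x x) y := by
  rw [hOp, br]
  simp [sub_mul, mul_sub, smul_mul_assoc, mul_smul_comm, br]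

lemma br_h_E (x b a : Fin n) :
    br (hOp d x) (Eop d b a) =
      (((if x = b then 1 else 0) - (if x = a then 1 else 0) : ℂ)) • Eop d b a := by
  rw [br_hOp, br_Eop_Eop, sub_smul]
  congr 1
  · split_ifs with h
    · subst h; simp
    · simp
  · split_ifs with h
    · subst h; simp
    · simp

lemma br_h_B (x i : Fin n) :
    br (hOp d x) (d.B false i) = -(((if x = i then 1 else 0 : ℂ)) • d.B false i) := by
  rw [br_hOp, br_Eop_Bm]
  split_ifs with h
  · subst h; simp
  · simp

lemma commute_h_h (a b : Fin n) : Commute (hOp d a) (hOp d b) := by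
  apply commute_of_br
  rw [show hOp d b = Eop d b b - ((((b:ℕ):ℂ)) • (1:U)) from rfl, br_sub_right, br_h_E]
  have : br (hOp d a) ((((b:ℕ):ℂ)) • (1:U)) = 0 := by
    rw [br_smul_right]; simp [br]
  rw [this]
  split_ifs <;> simp

lemma commute_h_E (x b a : Fin n) (h1 : x ≠ b) (h2 : x ≠ a) :
    Commute (hOp d x) (Eop d b a) := by
  apply commute_of_br; rw [br_h_E]; simp [h1, h2]

lemma commute_h_B (x i : Fin n) (h : x ≠ i) : Commute (hOp d x) (d.B false i) := by
  apply commute_of_br; rw [br_h_B]; simp [h]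

/- ### oprod and sorting lemmas -/

lemma oprod_empty (f : Fin n → U) : oprod (∅ : Finset (Fin n)) f = 1 := by
  simp [oprod]

lemma oprod_singleton (a : Fin n) (f : Fin n → U) : oprod {a} f = f a := by
  simp [oprod]

lemma sort_union (A B : Finset (Fin n)) (h : ∀ a ∈ A, ∀ b ∈ B, a < b) :
    (A ∪ B).sort (· ≤ ·) = A.sort (· ≤ ·) ++ B.sort (· ≤ ·) := by
  have hd : Disjoint A B := by
    rw [Finset.disjoint_left]
    intro a ha hb
    exact absurd (h a ha a hb) (lt_irrefl a)
  apply List.Perm.eq_of_pairwise' (Finset.pairwise_sort _ _) ?_ ?_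
  · show List.Pairwise _ _
    rw [List.pairwise_append]
    refine ⟨Finset.pairwise_sort _ _, Finset.pairwise_sort _ _, ?_⟩
    intro a ha b hb
    exact le_of_lt (h a (by simpa using ha) b (by simpa using hb))
  · rw [← Multiset.coe_eq_coe]
    have h2 : (A ∪ B).val = A.val + B.val := by
      rw [← Finset.disjUnion_eq_union A B hd]; rfl
    rw [← Multiset.coe_add]
    simp [h2]

lemma oprod_union (A B : Finset (Fin n)) (f : Fin n → U) (h : ∀ a ∈ A, ∀ b ∈ B, a < b) :
    oprod (A ∪ B) f = oprod A f * oprod B f := by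
  rw [oprod, oprod, oprod, sort_union A B h, List.map_append, List.prod_append]

lemma oprod_insert_min (a : Fin n) (S : Finset (Fin n)) (f : Fin n → U)
    (h : ∀ b ∈ S, a < b) : oprod (insert a S) f = f a * oprod S f := by
  rw [Finset.insert_eq, oprod_union _ _ _ (by simpa using h), oprod_singleton]

lemma oprod_insert_max (a : Fin n) (S : Finset (Fin n)) (f : Fin n → U)
    (h : ∀ b ∈ S, b < a) : oprod (insert a S) f = oprod S f * f a := by
  rw [Finset.insert_eq, Finset.union_comm,
    oprod_union _ _ _ (by simpa using h), oprod_singleton]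

lemma commute_oprod (x : U) (S : Finset (Fin n)) (f : Fin n → U)
    (h : ∀ l ∈ S, Commute x (f l)) : Commute x (oprod S f) := by
  apply Commute.list_prod_right
  intro y hy
  simp only [List.mem_map] at hy
  obtain ⟨l, hl, rfl⟩ := hy
  exact h l (by simpa using hl)

lemma exists_swap_list (x : U) (L : List U) (h : ∀ u ∈ L, ∃ u', x * u = u' * x) :
    ∃ w, x * L.prod = w * x := by
  induction L with
  | nil => exact ⟨1, by simp⟩
  | cons u L ih =>
    obtain ⟨u', hu⟩ := h u (by simp)
    obtain ⟨w, hw⟩ := ih (fun v hv => h v (by simp [hv]))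
    refine ⟨u' * w, ?_⟩
    rw [List.prod_cons, ← mul_assoc, hu, mul_assoc, hw, ← mul_assoc]

lemma exists_swap_oprod (x : U) (S : Finset (Fin n)) (f : Fin n → U)
    (h : ∀ l ∈ S, ∃ u', x * f l = u' * x) :
    ∃ w, x * oprod S f = w * x := by
  apply exists_swap_list
  intro u hu
  simp only [List.mem_map] at hu
  obtain ⟨l, hl, rfl⟩ := hu
  exact h l (by simpa using hl)

lemma middle_swap (X P Q : U) (h : Commute P X) : X * (P * Q) = P * (X * Q) := by
  rw [← mul_assoc, ← h.eq, mul_assoc]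

/- ### chainE lemmas -/

lemma chainE_single (a : Fin n) : chainE d [a] = 1 := rfl

lemma chainE_cons2 (a b : Fin n) (L : List (Fin n)) :
    chainE d (a :: b :: L) = Eop d b a * chainE d (b :: L) := rfl

lemma commute_h_chainE (x : Fin n) : ∀ (L : List (Fin n)), (∀ a ∈ L, x ≠ a) →
    Commute (hOp d x) (chainE d L)
  | [], _ => by simp [chainE]
  | [a], _ => by simp [chainE]
  | a :: b :: L, h => by
    rw [chainE_cons2]
    exact (commute_h_E d x b a (h b (by simp)) (h a (by simp))).mul_right
      (commute_h_chainE x (b :: L) (fun c hc => h c (by simp at hc ⊢; tauto)))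

/- ### sortIns lemmas -/

lemma sortIns_self (r : Fin n) : sortIns r r ∅ = [r] := by
  simp [sortIns]

/-- the subset of `Ioo r i` corresponding to the pair `(q, T')`. -/
def emb (q i : Fin n) (T' : Finset (Fin n)) : Finset (Fin n) :=
  if q = i then ∅ else insert q T'

lemma sortIns_head (q i : Fin n) (T' : Finset (Fin n)) (hqi : q ≤ i)
    (hT' : T' ⊆ Finset.Ioo q i) : ∃ tl, sortIns q i T' = q :: tl := by
  rcases eq_or_lt_of_le hqi with h | h
  · subst h
    have hT0 : T' = ∅ := by
      rw [← Finset.subset_empty, ← Finset.Ioo_self q]; exact hT'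
    subst hT0
    exact ⟨[], by simp [sortIns]⟩
  · refine ⟨Finset.sort (insert i T') (· ≤ ·), ?_⟩
    rw [sortIns]
    apply Finset.sort_insert
    · intro b hb
      simp only [Finset.mem_insert] at hb
      rcases hb with rfl | hb
      · exact hqi
      · exact le_of_lt (Finset.mem_Ioo.mp (hT' hb)).1
    · intro hq
      simp only [Finset.mem_insert] at hq
      rcases hq with rfl | hq
      · exact absurd h (lt_irrefl q)
      · exact absurd (Finset.mem_Ioo.mp (hT' hq)).1 (lt_irrefl q)

lemma sortIns_emb (r q i : Fin n) (T' : Finset (Fin n)) (hrq : r < q) (hqi : q ≤ i)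
    (hT' : T' ⊆ Finset.Ioo q i) :
    sortIns r i (emb q i T') = r :: sortIns q i T' := by
  have key : insert i (emb q i T') = insert q (insert i T') := by
    rcases eq_or_lt_of_le hqi with h | h
    · subst h
      have hT0 : T' = ∅ := by
        rw [← Finset.subset_empty, ← Finset.Ioo_self q]; exact hT'
      subst hT0
      simp [emb]
    · rw [emb, if_neg (ne_of_lt h), Finset.insert_comm]
  rw [sortIns, key, sortIns]
  apply Finset.sort_insert
  · intro b hb
    simp only [Finset.mem_insert] at hb
    rcases hb with rfl | hb
    · exact le_of_lt hrq
    rcases hb with rfl | hb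
    · exact le_of_lt (lt_of_lt_of_le hrq hqi)
    · exact le_of_lt (lt_trans hrq (Finset.mem_Ioo.mp (hT' hb)).1)
  · intro hr
    simp only [Finset.mem_insert] at hr
    rcases hr with rfl | hr
    · exact absurd hrq (lt_irrefl r)
    rcases hr with rfl | hr
    · exact absurd (lt_of_lt_of_le hrq hqi) (lt_irrefl r)
    · exact absurd (lt_trans hrq (Finset.mem_Ioo.mp (hT' hr)).1) (lt_irrefl r)

lemma chainE_emb (r q i : Fin n) (T' : Finset (Fin n)) (hrq : r < q) (hqi : q ≤ i)
    (hT' : T' ⊆ Finset.Ioo q i) :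
    chainE d (sortIns r i (emb q i T')) = Eop d q r * chainE d (sortIns q i T') := by
  obtain ⟨tl, htl⟩ := sortIns_head q i T' hqi hT'
  rw [sortIns_emb r q i T' hrq hqi hT', htl, chainE_cons2]

lemma mem_sortIns_ge (q i : Fin n) (T' : Finset (Fin n)) (hqi : q ≤ i)
    (hT' : T' ⊆ Finset.Ioo q i) (a : Fin n) (ha : a ∈ sortIns q i T') : q ≤ a := by
  rw [sortIns, Finset.mem_sort] at ha
  simp only [Finset.mem_insert] at ha
  rcases ha with rfl | ha
  · exact le_refl a
  rcases ha with rfl | ha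
  · exact hqi
  · exact le_of_lt (Finset.mem_Ioo.mp (hT' ha)).1

lemma sdiff_split (r q i : Fin n) (T' : Finset (Fin n)) (hrq : r < q) (hqi : q ≤ i)
    (hT' : T' ⊆ Finset.Ioo q i) :
    Finset.Ioi r \ insert i (emb q i T') =
      Finset.Ioo r q ∪ (Finset.Ioi q \ insert i T') := by
  ext l
  simp only [Finset.mem_sdiff, Finset.mem_Ioi, Finset.mem_insert, Finset.mem_union,
    Finset.mem_Ioo, emb]
  have h3 : (r : ℕ) < q := hrq
  have h4 : (q : ℕ) ≤ i := hqi
  by_cases hmem : l ∈ T'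
  · have hb := Finset.mem_Ioo.mp (hT' hmem)
    have h1 : (q : ℕ) < l := hb.1
    have h2 : (l : ℕ) < i := hb.2
    split_ifs with h
    · exact absurd (hT' hmem) (by simp [h])
    · simp only [Finset.mem_insert, hmem, Finset.notMem_empty, or_true, or_false, not_or,
        not_true, and_false, false_iff, false_or, or_self, and_true, true_and, ne_eq]
      simp only [Fin.lt_def, Fin.le_def, Fin.ext_iff]
      omega
  · split_ifs with h
    · have h5 : (q : ℕ) = i := by rw [h]
      simp only [Finset.mem_insert, hmem, Finset.notMem_empty, or_true, or_false, not_or,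
        not_true, and_false, false_iff, false_or, or_self, and_true, true_and, ne_eq]
      simp only [Fin.lt_def, Fin.le_def, Fin.ext_iff]
      omega
    · have h5 : (q : ℕ) ≠ i := fun hh => h (Fin.ext hh)
      simp only [Finset.mem_insert, hmem, Finset.notMem_empty, or_true, or_false, not_or,
        not_true, and_false, false_iff, false_or, or_self, and_true, true_and, ne_eq]
      simp only [Fin.lt_def, Fin.le_def, Fin.ext_iff]
      omega

/- ### The generalized lowering operator and its recursion -/

def Zg (d : OspData n U) (j r : Fin n) : U :=
  ∑ i ∈ Finset.Ici r, ∑ T ∈ (Finset.Ioo r i).powerset,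
    chainE d (sortIns r i T) * d.B false i *
      oprod (Finset.Ioi r \ insert i T) (fun l => hOp d j - hOp d l)

lemma zminus_eq_Zg (j : Fin n) : zminus d j = Zg d j j := rfl

lemma Ici_eq_insert (r : Fin n) : Finset.Ici r = insert r (Finset.Ioi r) := by
  ext l
  simp only [Finset.mem_Ici, Finset.mem_insert, Finset.mem_Ioi]
  rw [Fin.le_def, Fin.lt_def, Fin.ext_iff]
  omega

def toPair : ((_ : Fin n) × (_ : Fin n) × Finset (Fin n)) → ((_ : Fin n) × Finset (Fin n)) :=
  fun x => ⟨x.2.1, emb x.1 x.2.1 x.2.2⟩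

def toTriple : ((_ : Fin n) × Finset (Fin n)) → ((_ : Fin n) × (_ : Fin n) × Finset (Fin n)) :=
  fun p => if h : p.2.Nonempty then ⟨p.2.min' h, p.1, p.2.erase (p.2.min' h)⟩ else ⟨p.1, p.1, ∅⟩

lemma sum_reindex (r : Fin n) (g : Fin n → Finset (Fin n) → U) :
    ∑ q ∈ Finset.Ioi r, ∑ i ∈ Finset.Ici q, ∑ T' ∈ (Finset.Ioo q i).powerset, g i (emb q i T')
      = ∑ i ∈ Finset.Ioi r, ∑ T ∈ (Finset.Ioo r i).powerset, g i T := by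
  have e1 : ∀ q : Fin n,
      (∑ i ∈ Finset.Ici q, ∑ T' ∈ (Finset.Ioo q i).powerset, g i (emb q i T'))
        = ∑ x ∈ (Finset.Ici q).sigma (fun i => (Finset.Ioo q i).powerset),
            g x.1 (emb q x.1 x.2) := fun q => Finset.sum_sigma' _ _ _
  simp_rw [e1]
  rw [Finset.sum_sigma' (Finset.Ioi r)
    (fun q => (Finset.Ici q).sigma (fun i => (Finset.Ioo q i).powerset))
    (fun q x => g x.1 (emb q x.1 x.2))]
  rw [Finset.sum_sigma' (Finset.Ioi r) (fun i => (Finset.Ioo r i).powerset) (fun i T => g i T)]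
  apply Finset.sum_nbij' (i := fun x => toPair ⟨x.1, x.2⟩) (j := toTriple)
  · rintro ⟨q, i, T'⟩ hx
    simp only [Finset.mem_sigma, Finset.mem_Ioi, Finset.mem_Ici, Finset.mem_powerset] at hx
    obtain ⟨hrq, hqi, hT'⟩ := hx
    simp only [toPair, Finset.mem_sigma, Finset.mem_Ioi, Finset.mem_powerset]
    constructor
    · exact lt_of_lt_of_le hrq hqi
    · rw [emb]
      split_ifs with h
      · exact Finset.empty_subset _
      · intro l hl
        rcases Finset.mem_insert.mp hl with rfl | hl
        · exact Finset.mem_Ioo.mpr ⟨hrq, lt_of_le_of_ne hqi h⟩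
        · have := Finset.mem_Ioo.mp (hT' hl)
          exact Finset.mem_Ioo.mpr ⟨lt_trans hrq this.1, this.2⟩
  · rintro ⟨i, T⟩ hp
    simp only [Finset.mem_sigma, Finset.mem_Ioi, Finset.mem_powerset] at hp
    obtain ⟨hri, hT⟩ := hp
    rw [toTriple]
    split_ifs with h
    · have hqT := Finset.min'_mem T h
      have hq := Finset.mem_Ioo.mp (hT hqT)
      simp only [Finset.mem_sigma, Finset.mem_Ioi, Finset.mem_Ici, Finset.mem_powerset]
      refine ⟨hq.1, le_of_lt hq.2, ?_⟩
      intro l hl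
      have hlT := Finset.mem_of_mem_erase hl
      have hlq : T.min' h ≠ l := fun e => (Finset.notMem_erase l T) (e ▸ hl)
      exact Finset.mem_Ioo.mpr ⟨lt_of_le_of_ne (Finset.min'_le T l hlT) hlq,
        (Finset.mem_Ioo.mp (hT hlT)).2⟩
    · simp only [Finset.mem_sigma, Finset.mem_Ioi, Finset.mem_Ici, Finset.mem_powerset]
      exact ⟨hri, le_refl i, Finset.empty_subset _⟩
  · rintro ⟨q, i, T'⟩ hx
    simp only [Finset.mem_sigma, Finset.mem_Ioi, Finset.mem_Ici, Finset.mem_powerset] at hx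
    obtain ⟨hrq, hqi, hT'⟩ := hx
    rcases eq_or_lt_of_le hqi with h | h
    · subst h
      have hT0 : T' = ∅ := by
        rw [← Finset.subset_empty, ← Finset.Ioo_self q]; exact hT'
      subst hT0
      simp [toPair, toTriple, emb]
    · have hq : q ∉ T' := fun hq => lt_irrefl q (Finset.mem_Ioo.mp (hT' hq)).1
      have hne : (insert q T').Nonempty := ⟨q, Finset.mem_insert_self q T'⟩
      have hmin : (insert q T').min' hne = q := by
        apply le_antisymm (Finset.min'_le _ q (Finset.mem_insert_self q T'))
        apply Finset.le_min'
        intro b hb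
        rcases Finset.mem_insert.mp hb with rfl | hb
        · exact le_refl b
        · exact le_of_lt (Finset.mem_Ioo.mp (hT' hb)).1
      show toTriple ⟨i, emb q i T'⟩ = ⟨q, i, T'⟩
      rw [emb, if_neg (ne_of_lt h), toTriple]
      rw [dif_pos hne]
      simp only [hmin, Finset.erase_insert hq]
  · rintro ⟨i, T⟩ hp
    simp only [Finset.mem_sigma, Finset.mem_Ioi, Finset.mem_powerset] at hp
    obtain ⟨hri, hT⟩ := hp
    rw [toTriple]
    split_ifs with h
    · have hqT := Finset.min'_mem T h
      have hq := Finset.mem_Ioo.mp (hT hqT)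
      show toPair _ = _
      rw [toPair, emb]
      simp only
      rw [if_neg (ne_of_lt hq.2), Finset.insert_erase hqT]
    · have hT0 : T = ∅ := Finset.not_nonempty_iff_eq_empty.mp h
      subst hT0
      show toPair _ = _
      rw [toPair, emb]
      simp
  · rintro ⟨q, i, T'⟩ _
    rfl

lemma commute_fc_chainB (d : OspData n U) (x q i : Fin n) (T' : Finset (Fin n)) (hx : x < q)
    (hqi : q ≤ i) (hT' : T' ⊆ Finset.Ioo q i) (y : Fin n) (hy : y < q) :
    Commute (hOp d x - hOp d y) (chainE d (sortIns q i T') * d.B false i) := by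
  have hx' : ∀ z : Fin n, z < q → Commute (hOp d z) (chainE d (sortIns q i T') * d.B false i) := by
    intro z hz
    apply Commute.mul_right
    · exact commute_h_chainE d z _ (fun a ha =>
        ne_of_lt (lt_of_lt_of_le hz (mem_sortIns_ge q i T' hqi hT' a ha)))
    · exact commute_h_B d z i (ne_of_lt (lt_of_lt_of_le hz hqi))
  exact (hx' x hx).sub_left (hx' y hy)

lemma Zg_rec_term (j r q i : Fin n) (T' : Finset (Fin n)) (hjr : j ≤ r) (hrq : r < q)
    (hqi : q ≤ i) (hT' : T' ⊆ Finset.Ioo q i) :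
    chainE d (sortIns r i (emb q i T')) * d.B false i *
        oprod (Finset.Ioi r \ insert i (emb q i T')) (fun l => hOp d j - hOp d l)
      = Eop d q r * (oprod (Finset.Ioo r q) (fun l => hOp d j - hOp d l) *
          (chainE d (sortIns q i T') * d.B false i *
            oprod (Finset.Ioi q \ insert i T') (fun l => hOp d j - hOp d l))) := by
  have hlt : ∀ a ∈ Finset.Ioo r q, ∀ b ∈ Finset.Ioi q \ insert i T', a < b := by
    intro a ha b hb
    exact lt_trans (Finset.mem_Ioo.mp ha).2 (Finset.mem_Ioi.mp (Finset.mem_sdiff.mp hb).1)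
  have hcomm : Commute (oprod (Finset.Ioo r q) (fun l => hOp d j - hOp d l))
      (chainE d (sortIns q i T') * d.B false i) := by
    apply Commute.symm
    apply commute_oprod
    intro l hl
    exact (commute_fc_chainB d j q i T' (lt_of_le_of_lt hjr hrq) hqi hT' l
      (Finset.mem_Ioo.mp hl).2).symm
  rw [chainE_emb d r q i T' hrq hqi hT', sdiff_split r q i T' hrq hqi hT',
    oprod_union _ _ _ hlt, mul_assoc (Eop d q r) (chainE d (sortIns q i T')) (d.B false i),
    mul_assoc (Eop d q r), middle_swap _ _ _ hcomm]

lemma Zg_rec (j r : Fin n) (hjr : j ≤ r) :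
    Zg d j r = d.B false r * oprod (Finset.Ioi r) (fun l => hOp d j - hOp d l)
      + ∑ q ∈ Finset.Ioi r, Eop d q r *
          (oprod (Finset.Ioo r q) (fun l => hOp d j - hOp d l) * Zg d j q) := by
  rw [Zg, Ici_eq_insert, Finset.sum_insert (by simp)]
  congr 1
  · have hset : Finset.Ioi r \ insert r (∅ : Finset (Fin n)) = Finset.Ioi r := by
      ext l
      simp only [Finset.mem_sdiff, Finset.mem_Ioi, Finset.mem_insert, Finset.notMem_empty,
        or_false]
      exact ⟨fun h => h.1, fun h => ⟨h, fun e => absurd (e ▸ h) (lt_irrefl r)⟩⟩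
    rw [Finset.Ioo_self, Finset.powerset_empty, Finset.sum_singleton, sortIns_self,
      chainE_single, one_mul, hset]
  · rw [← sum_reindex r (fun i T => chainE d (sortIns r i T) * d.B false i *
      oprod (Finset.Ioi r \ insert i T) (fun l => hOp d j - hOp d l))]
    apply Finset.sum_congr rfl
    intro q hq
    rw [Zg]
    simp only [Finset.mul_sum]
    apply Finset.sum_congr rfl
    intro i hi
    apply Finset.sum_congr rfl
    intro T' hT'
    exact Zg_rec_term d j r q i T' hjr (Finset.mem_Ioi.mp hq) (Finset.mem_Ici.mp hi)
      (Finset.mem_powerset.mp hT')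

/- ### mul-form commutation lemmas -/

lemma br_sub_left (x y z : U) : br (x - y) z = br x z - br y z := by
  simp only [br]; noncomm_ring

lemma fin_ne_of_val_ne {a b : Fin n} (h : (a:ℕ) ≠ (b:ℕ)) : a ≠ b :=
  fun e => h (congrArg Fin.val e)

lemma Eop_kk (kk : Fin n) : Eop d kk kk = hOp d kk + ((kk:ℕ):ℂ) • (1:U) := by
  rw [hOp, sub_add_cancel]

def Jset (d : OspData n U) : Set U := {u : U | ∃ a b : Fin n, a < b ∧ u = Eop d a b}

lemma mul_Eop_mem (u : U) (a b : Fin n) (hab : a < b) :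
    u * Eop d a b ∈ Ideal.span (Jset d) :=
  Ideal.mul_mem_left _ u (Ideal.subset_span ⟨a, b, hab, rfl⟩)

lemma e_mul_B (k m i : Fin n) : Eop d k m * d.B false i
    = d.B false i * Eop d k m - (if k = i then d.B false m else 0) := by
  have h := mul_eq_of_br (Eop d k m) (d.B false i) _ (br_Eop_Bm d k m i)
  rw [h, sub_eq_add_neg]

lemma e_mul_E (k m q r : Fin n) : Eop d k m * Eop d q r
    = Eop d q r * Eop d k m
      + ((if m = q then Eop d k r else 0) - (if k = r then Eop d q m else 0)) :=
  mul_eq_of_br _ _ _ (br_Eop_Eop d k m q r)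

lemma e_swap_h (k m x : Fin n) :
    ∃ c : ℂ, Eop d k m * hOp d x = (hOp d x + c • 1) * Eop d k m := by
  refine ⟨(if x = m then 1 else 0) - (if x = k then 1 else 0), ?_⟩
  have hbr : br (Eop d k m) (hOp d x)
      = (((if x = m then 1 else 0) - (if x = k then 1 else 0) : ℂ)) • Eop d k m := by
    rw [br_neg_swap, br_h_E, ← neg_smul]
    congr 1
    ring
  rw [mul_eq_of_br _ _ _ hbr, add_mul, smul_mul_assoc, one_mul]

lemma e_swap_fc (k m j l : Fin n) :
    ∃ u', Eop d k m * (hOp d j - hOp d l) = u' * Eop d k m := by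
  obtain ⟨c1, h1⟩ := e_swap_h d k m j
  obtain ⟨c2, h2⟩ := e_swap_h d k m l
  exact ⟨(hOp d j + c1 • 1) - (hOp d l + c2 • 1), by rw [mul_sub, h1, h2, sub_mul]⟩

lemma e_swap_oprod (k m : Fin n) (S : Finset (Fin n)) (j : Fin n) :
    ∃ w, Eop d k m * oprod S (fun l => hOp d j - hOp d l) = w * Eop d k m :=
  exists_swap_oprod _ _ _ (fun l _ => e_swap_fc d k m j l)

lemma e_commute_fc (k m x y : Fin n) (h1 : x ≠ k) (h2 : x ≠ m) (h3 : y ≠ k) (h4 : y ≠ m) :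
    Commute (Eop d k m) (hOp d x - hOp d y) :=
  ((commute_h_E d x k m h1 h2).symm).sub_right ((commute_h_E d y k m h3 h4).symm)

lemma E_shift (q mm j : Fin n) (h1 : j ≠ q) (h2 : j ≠ mm) (h3 : mm ≠ q) :
    Eop d q mm * (hOp d j - hOp d mm) = (hOp d j - hOp d mm - 1) * Eop d q mm := by
  have hbr : br (Eop d q mm) (hOp d j - hOp d mm) = - Eop d q mm := by
    rw [br_neg_swap, br_sub_left, br_h_E, br_h_E, if_neg h1, if_neg h2, if_neg h3, if_pos rfl]
    norm_num
  rw [mul_eq_of_br _ _ _ hbr]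
  noncomm_ring

lemma B_shift (mm j : Fin n) (h2 : j ≠ mm) :
    d.B false mm * (hOp d j - hOp d mm) = (hOp d j - hOp d mm - 1) * d.B false mm := by
  have hbr : br (d.B false mm) (hOp d j - hOp d mm) = - d.B false mm := by
    rw [br_neg_swap, br_sub_left, br_h_B, br_h_B, if_neg h2, if_pos rfl]
    norm_num
  rw [mul_eq_of_br _ _ _ hbr]
  noncomm_ring

lemma push_lemma (e E P Z w C : U) (hE : e * E = E * e + C) (hw : e * P = w * e) :
    e * (E * (P * Z)) = E * (w * (e * Z)) + C * (P * Z) := by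
  rw [← mul_assoc e E, hE, add_mul, mul_assoc E e, ← mul_assoc e P, hw, mul_assoc w e]

lemma shiftL (E fm fm' P Z : U) (h : E * fm = fm' * E) :
    E * (fm * P * Z) = fm' * (E * (P * Z)) := by
  rw [mul_assoc fm P Z, ← mul_assoc E fm, h, mul_assoc fm' E]

lemma shiftL2 (B fm fm' P : U) (h : B * fm = fm' * B) :
    B * (fm * P) = fm' * (B * P) := by
  rw [← mul_assoc B fm, h, mul_assoc]

/- ### Finset interval facts -/

lemma Ioi_insert (k m : Fin n) (hm : (m:ℕ) = (k:ℕ)+1) :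
    Finset.Ioi k = insert m (Finset.Ioi m) := by
  ext l
  simp only [Finset.mem_Ioi, Finset.mem_insert]
  simp only [Fin.lt_def, Fin.ext_iff]
  omega

lemma Ioo_km_empty (k m : Fin n) (hm : (m:ℕ) = (k:ℕ)+1) : Finset.Ioo k m = ∅ := by
  ext l
  simp only [Finset.mem_Ioo, Finset.notMem_empty, iff_false, not_and]
  simp only [Fin.lt_def]
  omega

lemma Ioo_kq_insert (k m q : Fin n) (hm : (m:ℕ) = (k:ℕ)+1) (hq : m < q) :
    Finset.Ioo k q = insert m (Finset.Ioo m q) := by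
  have hq' : (m:ℕ) < q := hq
  ext l
  simp only [Finset.mem_Ioo, Finset.mem_insert]
  simp only [Fin.lt_def, Fin.ext_iff]
  omega

lemma Ioo_rm_insert (r k m : Fin n) (hm : (m:ℕ) = (k:ℕ)+1) (hrk : r < k) :
    Finset.Ioo r m = insert k (Finset.Ioo r k) := by
  have hrk' : (r:ℕ) < k := hrk
  ext l
  simp only [Finset.mem_Ioo, Finset.mem_insert]
  simp only [Fin.lt_def, Fin.ext_iff]
  omega

/- ### The key lemma -/

lemma key (j k m : Fin n) (hm : (m:ℕ) = (k:ℕ)+1) :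
    ∀ N : ℕ, ∀ r : Fin n, n - (r:ℕ) ≤ N → j ≤ r →
    Eop d k m * Zg d j r - (if r = k then (hOp d k - hOp d j) * Zg d j m else 0)
      ∈ Ideal.span (Jset d) := by
  have hkm : k < m := by rw [Fin.lt_def]; omega
  intro N
  induction N with
  | zero =>
    intro r hr _
    exfalso
    have := r.isLt
    omega
  | succ N ih =>
    intro r hrN hjr
    have IH : ∀ q : Fin n, r < q →
        Eop d k m * Zg d j q - (if q = k then (hOp d k - hOp d j) * Zg d j m else 0)
          ∈ Ideal.span (Jset d) := by
      intro q hq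
      have h1 : (r:ℕ) < q := hq
      have h2 := q.isLt
      exact ih q (by omega) (le_trans hjr (le_of_lt hq))
    rcases lt_trichotomy r k with hrk | hrk | hrk
    · -- case r < k
      have hjk : j ≠ k := ne_of_lt (lt_of_le_of_lt hjr hrk)
      have hjm : j ≠ m := by
        apply fin_ne_of_val_ne
        have h1 : (j:ℕ) ≤ r := hjr
        have h2 : (r:ℕ) < k := hrk
        omega
      rw [if_neg (ne_of_lt hrk), sub_zero, Zg_rec d j r hjr, mul_add, Finset.mul_sum]
      apply Submodule.add_mem
      · -- B-term
        obtain ⟨w, hw⟩ := e_swap_oprod d k m (Finset.Ioi r) j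
        have h1 : Eop d k m * (d.B false r * oprod (Finset.Ioi r) (fun l => hOp d j - hOp d l))
            = d.B false r * w * Eop d k m := by
          rw [← mul_assoc, e_mul_B, if_neg (ne_of_gt hrk), sub_zero, mul_assoc, hw, ← mul_assoc]
        rw [h1]
        exact mul_Eop_mem d _ k m hkm
      · -- sum term
        have step : ∀ q ∈ Finset.Ioi r,
            Eop d k m * (Eop d q r * (oprod (Finset.Ioo r q) (fun l => hOp d j - hOp d l) * Zg d j q))
              - ((if m = q then Eop d k r * (oprod (Finset.Ioo r q) (fun l => hOp d j - hOp d l) * Zg d j q) else 0)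
                + (if q = k then Eop d k r * (oprod (Finset.Ioo r k) (fun l => hOp d j - hOp d l) * ((hOp d k - hOp d j) * Zg d j m)) else 0))
              ∈ Ideal.span (Jset d) := by
          intro q hq
          have hrq : r < q := Finset.mem_Ioi.mp hq
          have hC : Eop d k m * Eop d q r = Eop d q r * Eop d k m
              + ((if m = q then Eop d k r else 0) - 0) := by
            rw [e_mul_E, if_neg (ne_of_gt hrk)]
          rw [sub_zero] at hC
          by_cases hqk : q = k
          · rw [hqk] at hC hrq ⊢
            rw [if_neg (ne_of_gt hkm)] at hC
            have hcomm : Eop d k m * oprod (Finset.Ioo r k) (fun l => hOp d j - hOp d l)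
                = oprod (Finset.Ioo r k) (fun l => hOp d j - hOp d l) * Eop d k m := by
              apply (commute_oprod _ _ _ ?_).eq
              intro l hl
              have hl' := Finset.mem_Ioo.mp hl
              refine e_commute_fc d k m j l hjk hjm (ne_of_lt hl'.2) ?_
              apply fin_ne_of_val_ne
              have h1 : (l:ℕ) < k := hl'.2
              omega
            rw [push_lemma _ _ _ _ _ _ hC hcomm, zero_mul, add_zero,
              if_neg (ne_of_gt hkm), zero_add, if_pos rfl, ← mul_sub, ← mul_sub]
            have h3 := IH k hrq
            rw [if_pos rfl] at h3
            exact Ideal.mul_mem_left _ _ (Ideal.mul_mem_left _ _ h3)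
          · obtain ⟨w, hw⟩ := e_swap_oprod d k m (Finset.Ioo r q) j
            rw [push_lemma _ _ _ _ _ _ hC hw, if_neg hqk, add_zero, ite_mul, zero_mul,
              add_sub_cancel_right]
            have h3 := IH q hrq
            rw [if_neg hqk, sub_zero] at h3
            exact Ideal.mul_mem_left _ _ (Ideal.mul_mem_left _ _ h3)
        have hsum := Submodule.sum_mem (Ideal.span (Jset d)) step
        rw [Finset.sum_sub_distrib] at hsum
        have hzero : (∑ q ∈ Finset.Ioi r,
            ((if m = q then Eop d k r * (oprod (Finset.Ioo r q) (fun l => hOp d j - hOp d l) * Zg d j q) else 0)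
              + (if q = k then Eop d k r * (oprod (Finset.Ioo r k) (fun l => hOp d j - hOp d l) * ((hOp d k - hOp d j) * Zg d j m)) else 0)))
            = 0 := by
          rw [Finset.sum_add_distrib, Finset.sum_ite_eq, Finset.sum_ite_eq',
            if_pos (Finset.mem_Ioi.mpr (lt_trans hrk hkm)), if_pos (Finset.mem_Ioi.mpr hrk)]
          rw [Ioo_rm_insert r k m hm hrk,
            oprod_insert_max k _ _ (fun b hb => (Finset.mem_Ioo.mp hb).2),
            mul_assoc (oprod (Finset.Ioo r k) (fun l => hOp d j - hOp d l))]
          rw [← mul_add, ← mul_add, ← add_mul]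
          have hz : (hOp d j - hOp d k) + (hOp d k - hOp d j) = 0 := by abel
          rw [hz, zero_mul, mul_zero, mul_zero]
        rw [hzero, sub_zero] at hsum
        exact hsum
    · -- case r = k
      subst hrk
      have hjm : j ≠ m := ne_of_lt (lt_of_le_of_lt hjr hkm)
      have hjm' : j ≤ m := le_of_lt (lt_of_le_of_lt hjr hkm)
      rw [if_pos rfl, Zg_rec d j r hjr, mul_add, Finset.mul_sum]
      obtain ⟨w0, hw0⟩ := e_swap_oprod d r m (Finset.Ioi r) j
      have hX1 : Eop d r m * (d.B false r * oprod (Finset.Ioi r) (fun l => hOp d j - hOp d l))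
          = d.B false r * w0 * Eop d r m
            - d.B false m * oprod (Finset.Ioi r) (fun l => hOp d j - hOp d l) := by
        rw [← mul_assoc, e_mul_B, if_pos rfl, sub_mul, mul_assoc, hw0, ← mul_assoc]
      have step : ∀ q ∈ Finset.Ioi r,
          Eop d r m * (Eop d q r * (oprod (Finset.Ioo r q) (fun l => hOp d j - hOp d l) * Zg d j q))
            - ((if m = q then Eop d r r * (oprod (Finset.Ioo r q) (fun l => hOp d j - hOp d l) * Zg d j q) else 0)
              - Eop d q m * (oprod (Finset.Ioo r q) (fun l => hOp d j - hOp d l) * Zg d j q))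
            ∈ Ideal.span (Jset d) := by
        intro q hq
        have hrq : r < q := Finset.mem_Ioi.mp hq
        obtain ⟨w, hw⟩ := e_swap_oprod d r m (Finset.Ioo r q) j
        have hC : Eop d r m * Eop d q r = Eop d q r * Eop d r m
            + ((if m = q then Eop d r r else 0) - Eop d q m) := by
          rw [e_mul_E, if_pos rfl]
        rw [push_lemma _ _ _ _ _ _ hC hw]
        have hexp : ((if m = q then Eop d r r else 0) - Eop d q m)
              * (oprod (Finset.Ioo r q) (fun l => hOp d j - hOp d l) * Zg d j q)
            = (if m = q then Eop d r r * (oprod (Finset.Ioo r q) (fun l => hOp d j - hOp d l) * Zg d j q) else 0)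
              - Eop d q m * (oprod (Finset.Ioo r q) (fun l => hOp d j - hOp d l) * Zg d j q) := by
          rw [sub_mul, ite_mul, zero_mul]
        rw [hexp, add_sub_cancel_right]
        have h3 := IH q hrq
        rw [if_neg (ne_of_gt hrq), sub_zero] at h3
        exact Ideal.mul_mem_left _ _ (Ideal.mul_mem_left _ _ h3)
      have hsum := Submodule.sum_mem (Ideal.span (Jset d)) step
      rw [Finset.sum_sub_distrib] at hsum
      have hID : (∑ q ∈ Finset.Ioi r,
            ((if m = q then Eop d r r * (oprod (Finset.Ioo r q) (fun l => hOp d j - hOp d l) * Zg d j q) else 0)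
              - Eop d q m * (oprod (Finset.Ioo r q) (fun l => hOp d j - hOp d l) * Zg d j q)))
          - d.B false m * oprod (Finset.Ioi r) (fun l => hOp d j - hOp d l)
          = (hOp d r - hOp d j) * Zg d j m := by
        rw [Finset.sum_sub_distrib, Finset.sum_ite_eq, if_pos (Finset.mem_Ioi.mpr hkm)]
        rw [Ioi_insert r m hm, Finset.sum_insert (by simp),
          oprod_insert_min m _ _ (fun b hb => Finset.mem_Ioi.mp hb)]
        rw [Ioo_km_empty r m hm, oprod_empty, one_mul]
        have hterm : ∀ q ∈ Finset.Ioi m,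
            Eop d q m * (oprod (Finset.Ioo r q) (fun l => hOp d j - hOp d l) * Zg d j q)
              = (hOp d j - hOp d m - 1)
                * (Eop d q m * (oprod (Finset.Ioo m q) (fun l => hOp d j - hOp d l) * Zg d j q)) := by
          intro q hq
          have hmq : m < q := Finset.mem_Ioi.mp hq
          rw [Ioo_kq_insert r m q hm hmq,
            oprod_insert_min m _ _ (fun b hb => (Finset.mem_Ioo.mp hb).1)]
          apply shiftL
          apply E_shift
          · apply fin_ne_of_val_ne
            have h1 : (j:ℕ) ≤ r := hjr
            have h2 : (m:ℕ) < q := hmq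
            omega
          · exact hjm
          · exact ne_of_lt hmq
        rw [Finset.sum_congr rfl hterm, ← Finset.mul_sum]
        rw [shiftL2 _ _ _ _ (B_shift d m j hjm)]
        have hre := Zg_rec d j m hjm'
        have hstep2 : Eop d r r * Zg d j m - (Eop d m m * Zg d j m
              + (hOp d j - hOp d m - 1) * (∑ q ∈ Finset.Ioi m,
                  Eop d q m * (oprod (Finset.Ioo m q) (fun l => hOp d j - hOp d l) * Zg d j q)))
            - (hOp d j - hOp d m - 1) * (d.B false m * oprod (Finset.Ioi m) (fun l => hOp d j - hOp d l))
            = Eop d r r * Zg d j m - Eop d m m * Zg d j m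
              - (hOp d j - hOp d m - 1) * Zg d j m := by
          have hre' : (hOp d j - hOp d m - 1) * Zg d j m
              = (hOp d j - hOp d m - 1) * (d.B false m * oprod (Finset.Ioi m) (fun l => hOp d j - hOp d l)
                + ∑ q ∈ Finset.Ioi m, Eop d q m * (oprod (Finset.Ioo m q) (fun l => hOp d j - hOp d l) * Zg d j q)) := by
            rw [← hre]
          rw [hre', mul_add]
          abel
        rw [hstep2, Eop_kk d r, Eop_kk d m, ← sub_mul, ← sub_mul]
        congr 1
        have hc : ((m:ℕ):ℂ) = ((r:ℕ):ℂ) + 1 := by exact_mod_cast hm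
        rw [hc, add_smul, one_smul]
        abel
      rw [hX1]
      have hfin : d.B false r * w0 * Eop d r m
            - d.B false m * oprod (Finset.Ioi r) (fun l => hOp d j - hOp d l)
            + (∑ q ∈ Finset.Ioi r,
                Eop d r m * (Eop d q r * (oprod (Finset.Ioo r q) (fun l => hOp d j - hOp d l) * Zg d j q)))
            - (hOp d r - hOp d j) * Zg d j m
          = d.B false r * w0 * Eop d r m
            + ((∑ q ∈ Finset.Ioi r,
                Eop d r m * (Eop d q r * (oprod (Finset.Ioo r q) (fun l => hOp d j - hOp d l) * Zg d j q)))
              - (∑ q ∈ Finset.Ioi r,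
                ((if m = q then Eop d r r * (oprod (Finset.Ioo r q) (fun l => hOp d j - hOp d l) * Zg d j q) else 0)
                  - Eop d q m * (oprod (Finset.Ioo r q) (fun l => hOp d j - hOp d l) * Zg d j q))))
            + ((∑ q ∈ Finset.Ioi r,
                ((if m = q then Eop d r r * (oprod (Finset.Ioo r q) (fun l => hOp d j - hOp d l) * Zg d j q) else 0)
                  - Eop d q m * (oprod (Finset.Ioo r q) (fun l => hOp d j - hOp d l) * Zg d j q)))
              - d.B false m * oprod (Finset.Ioi r) (fun l => hOp d j - hOp d l)
              - (hOp d r - hOp d j) * Zg d j m) := by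
        abel
      rw [hfin, show ((∑ q ∈ Finset.Ioi r,
                ((if m = q then Eop d r r * (oprod (Finset.Ioo r q) (fun l => hOp d j - hOp d l) * Zg d j q) else 0)
                  - Eop d q m * (oprod (Finset.Ioo r q) (fun l => hOp d j - hOp d l) * Zg d j q)))
              - d.B false m * oprod (Finset.Ioi r) (fun l => hOp d j - hOp d l)
              - (hOp d r - hOp d j) * Zg d j m) = 0 from by
        rw [sub_eq_zero]; exact hID, add_zero]
      exact Submodule.add_mem _ (mul_Eop_mem d _ r m hkm) hsum
    · -- case k < r
      rw [if_neg (ne_of_gt hrk), sub_zero, Zg_rec d j r hjr, mul_add, Finset.mul_sum]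
      apply Submodule.add_mem
      · obtain ⟨w, hw⟩ := e_swap_oprod d k m (Finset.Ioi r) j
        have h1 : Eop d k m * (d.B false r * oprod (Finset.Ioi r) (fun l => hOp d j - hOp d l))
            = d.B false r * w * Eop d k m := by
          rw [← mul_assoc, e_mul_B, if_neg (ne_of_lt hrk), sub_zero, mul_assoc, hw, ← mul_assoc]
        rw [h1]
        exact mul_Eop_mem d _ k m hkm
      · apply Submodule.sum_mem
        intro q hq
        have hrq : r < q := Finset.mem_Ioi.mp hq
        obtain ⟨w, hw⟩ := e_swap_oprod d k m (Finset.Ioo r q) j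
        have hC : Eop d k m * Eop d q r = Eop d q r * Eop d k m + 0 := by
          rw [e_mul_E, if_neg ?_, if_neg (ne_of_lt hrk)]
          · rw [sub_zero]
          · apply fin_ne_of_val_ne
            have h1 : (k:ℕ) < r := hrk
            have h2 : (r:ℕ) < q := hrq
            omega
        rw [push_lemma _ _ _ _ _ _ hC hw, zero_mul, add_zero]
        have h3 := IH q hrq
        rw [if_neg ?_, sub_zero] at h3
        · exact Ideal.mul_mem_left _ _ (Ideal.mul_mem_left _ _ h3)
        · apply fin_ne_of_val_ne
          have h1 : (k:ℕ) < r := hrk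
          have h2 : (r:ℕ) < q := hrq
          omega

set_option maxHeartbeats 1000000 in
lemma key_base (j k m : Fin n) (hm : (m:ℕ) = (k:ℕ)+1) :
    Eop d k m * zminus d j ∈ Ideal.span (Jset d) := by
  have h := key d j k m hm n j (Nat.sub_le n j) (le_refl j)
  rw [zminus_eq_Zg]
  by_cases hjk : j = k
  · rw [if_pos hjk, hjk, sub_self, zero_mul, sub_zero] at h
    rw [hjk]
    exact h
  · rw [if_neg hjk, sub_zero] at h
    exact h

lemma Ekl_mem (j : Fin n) : ∀ g : ℕ, ∀ k l : Fin n, (l:ℕ) = (k:ℕ) + g + 1 →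
    Eop d k l * zminus d j ∈ Ideal.span (Jset d) := by
  intro g
  induction g with
  | zero => exact fun k l hl => key_base d j k l hl
  | succ g ih =>
    intro k l hl
    have hkn : (k:ℕ)+1 < n := by have := l.isLt; omega
    set m : Fin n := ⟨(k:ℕ)+1, hkn⟩ with hmdef
    have hm : (m:ℕ) = (k:ℕ)+1 := rfl
    have hkl : k ≠ l := fin_ne_of_val_ne (by omega)
    have hsplit : Eop d k l = Eop d k m * Eop d m l - Eop d m l * Eop d k m := by
      have hbr := br_Eop_Eop d k m m l
      rw [if_pos rfl, if_neg hkl, sub_zero] at hbr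
      rw [← hbr, br]
    rw [hsplit, sub_mul, mul_assoc, mul_assoc]
    apply Submodule.sub_mem
    · exact Ideal.mul_mem_left _ _ (ih m l (by rw [hm]; omega))
    · exact Ideal.mul_mem_left _ _ (key_base d j k m hm)

lemma span_smul_eq_zero {M : Type*} [AddCommGroup M] [Module U M] (w : M)
    (hw : ∀ a b : Fin n, a < b → Eop d a b • w = 0) :
    ∀ u ∈ Ideal.span (Jset d), u • w = 0 := by
  intro u hu
  induction hu using Submodule.span_induction with
  | mem x hx =>
    obtain ⟨a, b, hab, rfl⟩ := hx
    exact hw a b hab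
  | zero => exact zero_smul U w
  | add x y hx hy ihx ihy => rw [add_smul, ihx, ihy, add_zero]
  | smul a x hx ihx => rw [smul_eq_mul, mul_smul, ihx, smul_zero]

end Aux


theorem stmt11 {n : ℕ} (hn : 0 < n) {U : Type*} [Ring U] [Algebra ℂ U] (d : OspData n U)
    (j k l : Fin n) (hkl : k < l) :
    Eop d k l * zminus d j ∈
      Ideal.span {u : U | ∃ a b : Fin n, a < b ∧ u = Eop d a b}
    ∧ ∀ (M : Type*) [AddCommGroup M] [Module U M] (w : M),
        (∀ a b : Fin n, a < b → Eop d a b • w = 0) →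
        ∀ a b : Fin n, a < b → Eop d a b • (zminus d j • w) = 0 := by
  
  have hkl' : (k:ℕ) < l := hkl
  constructor
  · exact Ekl_mem d j ((l:ℕ) - (k:ℕ) - 1) k l (by omega)
  · intro M _ _ w hw a b hab
    have hab' : (a:ℕ) < b := hab
    have h1 : Eop d a b * zminus d j ∈ Ideal.span (Jset d) :=
      Ekl_mem d j ((b:ℕ) - (a:ℕ) - 1) a b (by omega)
    rw [← mul_smul]
    exact span_smul_eq_zero d w hw _ h1
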